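/- Let 𝓗 be a set of graphs and suppose there exist reals c > 0 and k > 0 such that for every 𝓗-free graph G with |G| ≥ 2 there is an integer t = t(G) ≥ 2 and t pairwise disjoint subsets B_1, …, B_t of V(G), each of cardinality at least c|G|/t^k, such that either every pair (B_i, B_j) with i ≠ j is complete, or every pair (B_i, B_j) with i ≠ j is anticomplete. Then 𝓗 has the Erdős–Hajnal property: there exists τ > 0 such that every 𝓗-free graph G satisfies max(α(G), ω(G)) ≥ |G|^τ. -/

import Mathlib

open SimpleGraph

/-- The independence (stable set) number of a graph: the clique number of the complement. -/
noncomputable def alphaNum {V : Type*} (G : SimpleGraph V) : ℕ := Gᶜ.cliqueNum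

/-- The clique number of a graph. -/
noncomputable def omegaNum {V : Type*} (G : SimpleGraph V) : ℕ := G.cliqueNum

/-- κ(G) = α(G)·ω(G). -/
noncomputable def kappaNum {V : Type*} (G : SimpleGraph V) : ℕ := alphaNum G * omegaNum G

/-- `A` is complete to `B`: every vertex of `A` is adjacent to every vertex of `B`. -/
def CompleteTo {V : Type*} (G : SimpleGraph V) (A B : Finset V) : Prop :=
  ∀ a ∈ A, ∀ b ∈ B, G.Adj a b

/-- `A` is anticomplete to `B`: no vertex of `A` is adjacent to a vertex of `B`. -/
def AnticompleteTo {V : Type*} (G : SimpleGraph V) (A B : Finset V) : Prop :=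
  ∀ a ∈ A, ∀ b ∈ B, ¬ G.Adj a b

/-- The pattern of a pure blockade `(B 1, …, B t)`: the graph on `Fin t` in which `i, j`
are adjacent iff `i ≠ j` and `B i` is complete to `B j`. -/
def blockadePattern {V : Type*} (G : SimpleGraph V) {t : ℕ} (B : Fin t → Finset V) :
    SimpleGraph (Fin t) where
  Adj i j := i ≠ j ∧ CompleteTo G (B i) (B j)
  symm := ⟨by
    rintro i j ⟨hij, h⟩
    exact ⟨hij.symm, fun a ha b hb => (h b hb a ha).symm⟩⟩
  loopless := ⟨fun i h => h.1 rfl⟩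

/-! ### Auxiliary lemmas -/

lemma induce_compl_eq {V : Type*} (G : SimpleGraph V) (s : Set V) :
    Gᶜ.induce s = (G.induce s)ᶜ := by
  ext a b
  simp [compl_adj, Subtype.ext_iff]

lemma kappaNum_compl {V : Type*} (G : SimpleGraph V) : kappaNum Gᶜ = kappaNum G := by
  simp [kappaNum, alphaNum, omegaNum, compl_compl, Nat.mul_comm]

/-- From a clique in the induced subgraph on a finset, get a clique in `G` inside the finset. -/
lemma exists_clique_of_induce {V : Type} [Fintype V] (G : SimpleGraph V) (s : Finset V) :
    ∃ C ⊆ s, G.IsNClique ((G.induce (↑s : Set V)).cliqueNum) C := by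
  obtain ⟨S, hS⟩ := (G.induce (↑s : Set V)).exists_isNClique_cliqueNum
  refine ⟨S.map ⟨Subtype.val, Subtype.val_injective⟩, ?_, ?_, ?_⟩
  · intro x hx
    simp only [Finset.mem_map, Function.Embedding.coeFn_mk] at hx
    obtain ⟨a, _, rfl⟩ := hx
    exact a.2
  · intro x hx y hy hxy
    simp only [Finset.coe_map, Set.mem_image, Finset.mem_coe,
      Function.Embedding.coeFn_mk] at hx hy
    obtain ⟨a, ha, rfl⟩ := hx
    obtain ⟨b, hb, rfl⟩ := hy
    have hab : a ≠ b := fun h => hxy (by rw [h])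
    exact hS.isClique ha hb hab
  · rw [Finset.card_map, hS.card_eq]

lemma omegaNum_induce_le {V : Type} [Fintype V] (G : SimpleGraph V) (s : Finset V) :
    omegaNum (G.induce (↑s : Set V)) ≤ omegaNum G := by
  obtain ⟨C, _, hC⟩ := exists_clique_of_induce G s
  have := hC.isClique.card_le_cliqueNum
  rw [hC.card_eq] at this
  exact this

lemma alphaNum_induce_le {V : Type} [Fintype V] (G : SimpleGraph V) (s : Finset V) :
    alphaNum (G.induce (↑s : Set V)) ≤ alphaNum G := by
  have h : alphaNum (G.induce (↑s : Set V)) = omegaNum (Gᶜ.induce (↑s : Set V)) := by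
    rw [alphaNum, omegaNum, induce_compl_eq]
  rw [h]
  exact omegaNum_induce_le Gᶜ s

/-- A clique of size `m` in each part of a pairwise-complete disjoint family gives a
clique of size `t * m`. -/
lemma blockade_clique {V : Type} [Fintype V] (G : SimpleGraph V) {t : ℕ}
    (B : Fin t → Finset V) (hdisj : Pairwise (Function.onFun Disjoint B))
    (hcomp : ∀ i j, i ≠ j → CompleteTo G (B i) (B j)) (m : ℕ)
    (hm : ∀ i, ∃ C ⊆ B i, G.IsNClique m C) :
    t * m ≤ omegaNum G := by
  choose C hCsub hC using hm
  classical
  have hdisjC : ∀ i ∈ (Finset.univ : Finset (Fin t)), ∀ j ∈ Finset.univ, i ≠ j →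
      Disjoint (C i) (C j) := fun i _ j _ hij =>
    (hdisj hij).mono (hCsub i) (hCsub j)
  have hcard : (Finset.univ.biUnion C).card = t * m := by
    rw [Finset.card_biUnion hdisjC]
    simp [(hC _).card_eq, Finset.sum_const, Finset.card_univ]
  have hclique : G.IsClique (Finset.univ.biUnion C) := by
    intro x hx y hy hxy
    rw [Finset.mem_coe, Finset.mem_biUnion] at hx hy
    obtain ⟨i, -, hi⟩ := hx
    obtain ⟨j, -, hj⟩ := hy
    rcases eq_or_ne i j with rfl | hij
    · exact (hC i).isClique hi hj hxy
    · exact hcomp i j hij x (hCsub i hi) y (hCsub j hj)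
  have := hclique.card_le_cliqueNum
  rw [hcard] at this
  exact this

/-- The key combinatorial step: from a pairwise-complete disjoint blockade, some part
has `t * κ(part) ≤ κ(G)`. -/
lemma kappa_blockade {V : Type} [Fintype V] (G : SimpleGraph V) {t : ℕ} (ht : 1 ≤ t)
    (B : Fin t → Finset V) (hdisj : Pairwise (Function.onFun Disjoint B))
    (hcomp : ∀ i j, i ≠ j → CompleteTo G (B i) (B j)) :
    ∃ i, t * kappaNum (G.induce (↑(B i) : Set V)) ≤ kappaNum G := by
  classical
  obtain ⟨i₀, -, hmin⟩ := Finset.exists_min_image (Finset.univ : Finset (Fin t))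
    (fun i => omegaNum (G.induce (↑(B i) : Set V)))
    ⟨⟨0, ht⟩, Finset.mem_univ _⟩
  refine ⟨i₀, ?_⟩
  set m := omegaNum (G.induce (↑(B i₀) : Set V)) with hm
  have homega : t * m ≤ omegaNum G := by
    apply blockade_clique G B hdisj hcomp
    intro j
    obtain ⟨C, hCsub, hC⟩ := exists_clique_of_induce G (B j)
    have hmle : m ≤ C.card := by
      rw [hC.card_eq]
      exact hmin j (Finset.mem_univ j)
    obtain ⟨D, hDC, hD⟩ := Finset.exists_subset_card_eq hmle
    exact ⟨D, fun x hx => hCsub (hDC hx), hC.isClique.subset (by exact_mod_cast hDC), hD⟩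
  have halpha : alphaNum (G.induce (↑(B i₀) : Set V)) ≤ alphaNum G :=
    alphaNum_induce_le G (B i₀)
  calc t * kappaNum (G.induce (↑(B i₀) : Set V))
      = alphaNum (G.induce (↑(B i₀) : Set V)) * (t * m) := by
        rw [kappaNum]; ring
    _ ≤ alphaNum G * omegaNum G := Nat.mul_le_mul halpha homega
    _ = kappaNum G := rfl

lemma one_le_kappaNum {V : Type} [Fintype V] [Nonempty V] (G : SimpleGraph V) :
    1 ≤ kappaNum G := by
  have h : ∀ (H : SimpleGraph V), 1 ≤ H.cliqueNum := by
    intro H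
    obtain ⟨v⟩ := ‹Nonempty V›
    have : H.IsClique ({v} : Finset V) := by simp
    have := this.card_le_cliqueNum
    simpa using this
  exact Nat.one_le_iff_ne_zero.mpr (by
    have := Nat.mul_le_mul (h Gᶜ) (h G)
    simp only [kappaNum, alphaNum, omegaNum]
    omega)

/-- Tomon's observation: if for every `𝓗`-free graph `G` with `|G| ≥ 2` there are
`t ≥ 2` pairwise disjoint sets of size at least `c|G|/t^k` that are pairwise complete or
pairwise anticomplete, then `𝓗` has the Erdős–Hajnal property. -/
theorem stmt_19 (𝓗 : Set (Σ n : ℕ, SimpleGraph (Fin n))) (c k : ℝ)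
    (hc : 0 < c) (hk : 0 < k)
    (hyp : ∀ (V : Type) [Fintype V] (G : SimpleGraph V),
      (∀ H ∈ 𝓗, ¬ Nonempty (H.2 ↪g G)) → 2 ≤ Fintype.card V →
      ∃ t : ℕ, 2 ≤ t ∧ ∃ B : Fin t → Finset V,
        Pairwise (Function.onFun Disjoint B) ∧
        (∀ i, c * (Fintype.card V : ℝ) / (t : ℝ) ^ k ≤ ((B i).card : ℝ)) ∧
        ((∀ i j, i ≠ j → CompleteTo G (B i) (B j)) ∨
         (∀ i j, i ≠ j → AnticompleteTo G (B i) (B j)))) :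
    ∃ τ : ℝ, 0 < τ ∧
      ∀ (V : Type) [Fintype V] (G : SimpleGraph V),
        (∀ H ∈ 𝓗, ¬ Nonempty (H.2 ↪g G)) →
        (Fintype.card V : ℝ) ^ τ ≤ ((max (alphaNum G) (omegaNum G) : ℕ) : ℝ) := by
  -- choose τ
  set τ : ℝ := min (1 / (2 * k)) (Real.log 2 / (2 * (|Real.log c| + 1))) with hτdef
  have hτpos : 0 < τ := by
    apply lt_min
    · positivity
    · apply div_pos (Real.log_pos one_lt_two); positivity
  have hkτ : k * τ ≤ 1 / 2 := by
    have h1 : τ ≤ 1 / (2 * k) := min_le_left _ _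
    calc k * τ ≤ k * (1 / (2 * k)) := mul_le_mul_of_nonneg_left h1 hk.le
      _ = 1 / 2 := by field_simp
  have hcτ : Real.exp (-(Real.log 2 / 2)) ≤ c ^ τ := by
    rw [← Real.exp_log hc, ← Real.exp_mul] -- c^τ = exp (log c * τ)
    apply Real.exp_le_exp.mpr
    have h2 : τ ≤ Real.log 2 / (2 * (|Real.log c| + 1)) := min_le_right _ _
    have habs : -|Real.log c| ≤ Real.log c := neg_abs_le _
    have h3 : τ * |Real.log c| ≤ Real.log 2 / 2 := by
      rcases le_or_gt (|Real.log c|) 0 with h | h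
      · have : |Real.log c| = 0 := le_antisymm h (abs_nonneg _)
        rw [this]; simp; positivity
      · calc τ * |Real.log c| ≤ (Real.log 2 / (2 * (|Real.log c| + 1))) * |Real.log c| :=
              mul_le_mul_of_nonneg_right h2 (abs_nonneg _)
          _ ≤ Real.log 2 / 2 := by
              rw [div_mul_eq_mul_div, div_le_div_iff₀ (by positivity) (by norm_num)]
              nlinarith [Real.log_pos one_lt_two]
    nlinarith [abs_nonneg (Real.log c), hτpos.le, neg_abs_le (Real.log c)]
  -- key real inequality
  have hkey : ∀ t : ℕ, 2 ≤ t → (1 : ℝ) ≤ (t : ℝ) ^ (1 - k * τ) * c ^ τ := by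
    intro t ht
    have ht2 : (2 : ℝ) ≤ (t : ℝ) := by exact_mod_cast ht
    have h1 : (2 : ℝ) ^ ((1:ℝ)/2) ≤ (t : ℝ) ^ (1 - k * τ) := by
      calc (2 : ℝ) ^ ((1:ℝ)/2) ≤ (2 : ℝ) ^ (1 - k * τ) :=
            Real.rpow_le_rpow_of_exponent_le one_le_two (by linarith)
        _ ≤ (t : ℝ) ^ (1 - k * τ) := by
            apply Real.rpow_le_rpow (by norm_num) ht2
            nlinarith [mul_pos hk hτpos]
    have h2 : (2:ℝ) ^ ((1:ℝ)/2) * Real.exp (-(Real.log 2 / 2)) = 1 := by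
      rw [Real.rpow_def_of_pos (by norm_num : (0:ℝ) < 2), ← Real.exp_add]
      ring_nf
      exact Real.exp_zero
    calc (1 : ℝ) = (2:ℝ) ^ ((1:ℝ)/2) * Real.exp (-(Real.log 2 / 2)) := h2.symm
      _ ≤ (t : ℝ) ^ (1 - k * τ) * c ^ τ := by
          apply mul_le_mul h1 hcτ (Real.exp_pos _).le
          positivity
  -- main induction: κ(G) ≥ n^τ
  have main : ∀ n : ℕ, ∀ (V : Type) [Fintype V] (G : SimpleGraph V),
      Fintype.card V = n → (∀ H ∈ 𝓗, ¬ Nonempty (H.2 ↪g G)) →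
      (n : ℝ) ^ τ ≤ (kappaNum G : ℝ) := by
    intro n
    induction n using Nat.strong_induction_on with
    | _ n IH =>
      intro V _ G hcard hfree
      classical
      rcases Nat.lt_or_ge n 2 with hn | hn
      · interval_cases n
        · rw [Nat.cast_zero, Real.zero_rpow hτpos.ne']
          positivity
        · rw [Nat.cast_one, Real.one_rpow]
          have : Nonempty V := Fintype.card_pos_iff.mp (by omega)
          exact_mod_cast one_le_kappaNum G
      -- inductive step
      obtain ⟨t, ht2, B, hdisj, hsize, hcases⟩ := hyp V G hfree (hcard ▸ hn)
      have htpos : (0:ℝ) < (t:ℝ) := by positivity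
      have hnpos : (0:ℝ) < (n:ℝ) := by positivity
      have hsize' : ∀ i, c * (n : ℝ) / (t : ℝ) ^ k ≤ ((B i).card : ℝ) := by
        intro i; have := hsize i; rwa [hcard] at this
      have hBpos : ∀ i, 0 < (B i).card := by
        intro i
        have h := hsize' i
        have : (0:ℝ) < c * (n:ℝ) / (t:ℝ) ^ k := by positivity
        exact_mod_cast this.trans_le h
      have hBlt : ∀ i, (B i).card < n := by
        intro i
        have hj : ∃ j : Fin t, j ≠ i := by
          by_cases h : i = ⟨0, by omega⟩
          · exact ⟨⟨1, by omega⟩, by rw [h]; simp [Fin.ext_iff]⟩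
          · exact ⟨⟨0, by omega⟩, fun h' => h h'.symm⟩
        obtain ⟨j, hj⟩ := hj
        have hdij : Disjoint (B i) (B j) := hdisj hj.symm
        have : (B i).card + (B j).card ≤ n := by
          rw [← Finset.card_union_of_disjoint hdij, ← hcard]
          exact Finset.card_le_univ _
        have := hBpos j
        omega
      -- IH for each part
      have hIH : ∀ i, (c * (n : ℝ) / (t : ℝ) ^ k) ^ τ ≤
          (kappaNum (G.induce (↑(B i) : Set V)) : ℝ) := by
        intro i
        have hcardi : Fintype.card (↑(B i) : Set V) = (B i).card := Fintype.card_coe _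
        have hfree' : ∀ H ∈ 𝓗, ¬ Nonempty (H.2 ↪g G.induce (↑(B i) : Set V)) := by
          intro H hH ⟨e⟩
          exact hfree H hH ⟨(SimpleGraph.Embedding.induce _).comp e⟩
        have := IH (B i).card (hBlt i) (↑(B i) : Set V) (G.induce _) hcardi hfree'
        calc (c * (n : ℝ) / (t : ℝ) ^ k) ^ τ ≤ ((B i).card : ℝ) ^ τ :=
              Real.rpow_le_rpow (by positivity) (hsize' i) hτpos.le
          _ ≤ _ := this
      -- get the blockade inequality for κ(G)
      have hblock : ∃ i, t * kappaNum (G.induce (↑(B i) : Set V)) ≤ kappaNum G := by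
        rcases hcases with hcomp | hanti
        · exact kappa_blockade G (by omega) B hdisj hcomp
        · have hcomp : ∀ i j, i ≠ j → CompleteTo Gᶜ (B i) (B j) := by
            intro i j hij a ha b hb
            refine ⟨?_, hanti i j hij a ha b hb⟩
            intro hab
            exact (Finset.disjoint_left.mp (hdisj hij) ha) (hab ▸ hb)
          obtain ⟨i, hi⟩ := kappa_blockade Gᶜ (by omega) B hdisj hcomp
          refine ⟨i, ?_⟩
          rwa [induce_compl_eq, kappaNum_compl, kappaNum_compl] at hi
      obtain ⟨i, hi⟩ := hblock
      -- combine
      have step1 : (n : ℝ) ^ τ ≤ (t : ℝ) * (c * (n : ℝ) / (t : ℝ) ^ k) ^ τ := by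
        have hexp : (c * (n : ℝ) / (t : ℝ) ^ k) ^ τ =
            c ^ τ * (n : ℝ) ^ τ / ((t : ℝ) ^ k) ^ τ := by
          rw [Real.div_rpow (by positivity) (by positivity),
            Real.mul_rpow hc.le hnpos.le]
        calc (n:ℝ)^τ = 1 * (n:ℝ)^τ := (one_mul _).symm
          _ ≤ ((t:ℝ)^(1-k*τ) * c^τ) * (n:ℝ)^τ :=
              mul_le_mul_of_nonneg_right (hkey t ht2) (Real.rpow_nonneg hnpos.le τ)
          _ = (t:ℝ) * (c^τ * (n:ℝ)^τ / (t:ℝ)^(k*τ)) := by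
              rw [Real.rpow_sub htpos, Real.rpow_one]; ring
          _ = (t:ℝ) * (c*(n:ℝ)/(t:ℝ)^k)^τ := by
              rw [hexp, ← Real.rpow_mul htpos.le]
      calc (n : ℝ) ^ τ ≤ (t : ℝ) * (c * (n : ℝ) / (t : ℝ) ^ k) ^ τ := step1
        _ ≤ (t : ℝ) * (kappaNum (G.induce (↑(B i) : Set V)) : ℝ) :=
            mul_le_mul_of_nonneg_left (hIH i) htpos.le
        _ ≤ (kappaNum G : ℝ) := by exact_mod_cast hi
  -- finish: τ/2 works
  refine ⟨τ / 2, by positivity, ?_⟩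
  intro V _ G hfree
  have hκ := main (Fintype.card V) V G rfl hfree
  set M := max (alphaNum G) (omegaNum G) with hM
  have hκM : (kappaNum G : ℝ) ≤ (M : ℝ) ^ 2 := by
    have : kappaNum G ≤ M * M :=
      Nat.mul_le_mul (le_max_left _ _) (le_max_right _ _)
    rw [sq]
    exact_mod_cast this
  have h1 : (Fintype.card V : ℝ) ^ τ ≤ (M : ℝ) ^ 2 := hκ.trans hκM
  have hM0 : (0:ℝ) ≤ (M:ℝ) := Nat.cast_nonneg _
  have h2 := Real.rpow_le_rpow (Real.rpow_nonneg (Nat.cast_nonneg _) τ) h1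
    (by norm_num : (0:ℝ) ≤ 1/2)
  rw [← Real.rpow_natCast (M:ℝ) 2, ← Real.rpow_mul hM0,
    ← Real.rpow_mul (Nat.cast_nonneg _)] at h2
  norm_num at h2
  convert h2 using 2
  ring
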